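/- Let T be a spherically homogeneous rooted tree, let G ≤ Aut(T) be a weakly branch group, and let H ≤ G be a quasi-prodense subgroup of G. Then for every vertex v of T, the subgroup H_v = φ_v(St_H(v)) is a quasi-prodense subgroup of G_v = φ_v(St_G(v)). -/

import Mathlib

open scoped Pointwise

/-! ## Spherically homogeneous rooted trees -/

/-- A vertex of the spherically homogeneous rooted tree over the shifted sequence of
alphabets `i ↦ A (i + k)`: a finite word whose `j`-th letter belongs to `A (j + k)`. -/
def Vtx (A : ℕ → Type*) (k : ℕ) : Type _ :=
  {l : List (Σ i, A i) // ∀ j (h : j < l.length), (l[j]'h).1 = j + k}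

namespace Vtx

variable {A : ℕ → Type*}

/-- The length of a vertex (the distance to the root). -/
def len {k : ℕ} (v : Vtx A k) : ℕ := v.1.length

/-- The prefix relation on vertices. -/
def Pre {k : ℕ} (v w : Vtx A k) : Prop := v.1 <+: w.1

/-- The `n`-th level of the tree: all vertices of length `n`. -/
def level (A : ℕ → Type*) (k : ℕ) (n : ℕ) : Set (Vtx A k) := {v | v.len = n}

/-- Concatenation of a vertex of the tree with a word over the shifted alphabets. -/
def cat (v : Vtx A 0) (w : Vtx A v.len) : Vtx A 0 :=
  ⟨v.1 ++ w.1, by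
    intro j h
    by_cases hj : j < v.1.length
    · rw [List.getElem_append_left hj]
      exact v.2 j hj
    · push_neg at hj
      rw [List.getElem_append_right hj]
      have h2 : j - v.1.length < w.1.length := by
        have h3 := h
        simp only [List.length_append] at h3
        omega
      exact (w.2 (j - v.1.length) h2).trans
        (by show j - v.1.length + v.1.length = j + 0; omega)⟩

/-- Deleting a prefix of length `n` from a vertex. -/
def dropPre (n : ℕ) (u : Vtx A 0) : Vtx A n :=
  ⟨u.1.drop n, by
    intro j h
    have h' : n + j < u.1.length := by
      simp only [List.length_drop] at h
      omega
    rw [List.getElem_drop]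
    exact (u.2 (n + j) h').trans (by omega)⟩

end Vtx

/-- The full automorphism group of the rooted tree `T_k`:
bijections of the vertex set preserving word length and the prefix relation. -/
def treeAut (A : ℕ → Type*) (k : ℕ) : Subgroup (Equiv.Perm (Vtx A k)) where
  carrier := {f | (∀ v, (f v).len = v.len) ∧ ∀ v w, Vtx.Pre (f v) (f w) ↔ Vtx.Pre v w}
  one_mem' := ⟨fun _ => rfl, fun _ _ => Iff.rfl⟩
  mul_mem' := by
    rintro f g ⟨hf1, hf2⟩ ⟨hg1, hg2⟩
    constructor
    · intro v
      have : (f * g) v = f (g v) := rfl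
      rw [this]
      exact (hf1 (g v)).trans (hg1 v)
    · intro v w
      have e1 : (f * g) v = f (g v) := rfl
      have e2 : (f * g) w = f (g w) := rfl
      rw [e1, e2]
      exact (hf2 (g v) (g w)).trans (hg2 v w)
  inv_mem' := by
    rintro f ⟨hf1, hf2⟩
    constructor
    · intro v
      conv_rhs => rw [← (show f (f⁻¹ v) = v from Equiv.apply_symm_apply f v)]
      exact (hf1 _).symm
    · intro v w
      conv_rhs => rw [← (show f (f⁻¹ v) = v from Equiv.apply_symm_apply f v),
        ← (show f (f⁻¹ w) = w from Equiv.apply_symm_apply f w)]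
      exact (hf2 _ _).symm

variable {A : ℕ → Type*}

/-- The stabiliser `St_H(v)` of a vertex `v` in a subgroup `H ≤ Perm`. -/
def vstab {k : ℕ} (H : Subgroup (Equiv.Perm (Vtx A k))) (v : Vtx A k) :
    Subgroup (Equiv.Perm (Vtx A k)) where
  carrier := {g | g ∈ H ∧ g v = v}
  one_mem' := ⟨H.one_mem, rfl⟩
  mul_mem' := by
    rintro a b ⟨ha, ha'⟩ ⟨hb, hb'⟩
    refine ⟨H.mul_mem ha hb, ?_⟩
    have : (a * b) v = a (b v) := rfl
    rw [this, hb', ha']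
  inv_mem' := by
    rintro a ⟨ha, ha'⟩
    refine ⟨H.inv_mem ha, ?_⟩
    conv_lhs => rw [← ha']
    exact Equiv.symm_apply_apply a v

/-- The stabiliser `St_H(n)` of the `n`-th level. -/
def levStab {k : ℕ} (H : Subgroup (Equiv.Perm (Vtx A k))) (n : ℕ) :
    Subgroup (Equiv.Perm (Vtx A k)) where
  carrier := {g | g ∈ H ∧ ∀ v : Vtx A k, v.len = n → g v = v}
  one_mem' := ⟨H.one_mem, fun _ _ => rfl⟩
  mul_mem' := by
    rintro a b ⟨ha, ha'⟩ ⟨hb, hb'⟩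
    refine ⟨H.mul_mem ha hb, fun v hv => ?_⟩
    have : (a * b) v = a (b v) := rfl
    rw [this, hb' v hv, ha' v hv]
  inv_mem' := by
    rintro a ⟨ha, ha'⟩
    refine ⟨H.inv_mem ha, fun v hv => ?_⟩
    conv_lhs => rw [← ha' v hv]
    exact Equiv.symm_apply_apply a v

/-- The rigid stabiliser `rist_H(v)`: elements of `H` fixing every vertex that does not
have `v` as a prefix. -/
def rist {k : ℕ} (H : Subgroup (Equiv.Perm (Vtx A k))) (v : Vtx A k) :
    Subgroup (Equiv.Perm (Vtx A k)) where
  carrier := {g | g ∈ H ∧ ∀ w : Vtx A k, ¬ Vtx.Pre v w → g w = w}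
  one_mem' := ⟨H.one_mem, fun _ _ => rfl⟩
  mul_mem' := by
    rintro a b ⟨ha, ha'⟩ ⟨hb, hb'⟩
    refine ⟨H.mul_mem ha hb, fun w hw => ?_⟩
    have : (a * b) w = a (b w) := rfl
    rw [this, hb' w hw, ha' w hw]
  inv_mem' := by
    rintro a ⟨ha, ha'⟩
    refine ⟨H.inv_mem ha, fun w hw => ?_⟩
    conv_lhs => rw [← ha' w hw]
    exact Equiv.symm_apply_apply a w

/-- The rigid level stabiliser `rist_H(n)`: the subgroup generated by the rigid
stabilisers of the vertices on the `n`-th level. -/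
def ristLev {k : ℕ} (H : Subgroup (Equiv.Perm (Vtx A k))) (n : ℕ) :
    Subgroup (Equiv.Perm (Vtx A k)) :=
  ⨆ v ∈ {v : Vtx A k | v.len = n}, rist H v

/-- `G` acts spherically transitively: transitively on every level of the tree. -/
def SphTrans {k : ℕ} (G : Subgroup (Equiv.Perm (Vtx A k))) : Prop :=
  ∀ v w : Vtx A k, v.len = w.len → ∃ g ∈ G, g v = w

/-- `G ≤ Aut(T_k)` is a branch group. -/
structure IsBranch {k : ℕ} (G : Subgroup (Equiv.Perm (Vtx A k))) : Prop where
  le_aut : G ≤ treeAut A k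
  trans : SphTrans G
  rist_fi : ∀ n : ℕ, (ristLev G n).relIndex G ≠ 0

/-- `G ≤ Aut(T_k)` is a weakly branch group. -/
structure IsWeaklyBranch {k : ℕ} (G : Subgroup (Equiv.Perm (Vtx A k))) : Prop where
  le_aut : G ≤ treeAut A k
  trans : SphTrans G
  rist_nt : ∀ n : ℕ, ristLev G n ≠ ⊥

/-! ## Sections -/

namespace Vtx

theorem dropPre_cat (v : Vtx A 0) (w : Vtx A v.len) : dropPre v.len (cat v w) = w := by
  apply Subtype.ext
  show (v.1 ++ w.1).drop v.1.length = w.1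
  exact List.drop_left

theorem pre_cat (v : Vtx A 0) (w : Vtx A v.len) : Pre v (cat v w) := ⟨w.1, rfl⟩

theorem cat_dropPre {v u : Vtx A 0} (h : Pre v u) : cat v (dropPre v.len u) = u := by
  apply Subtype.ext
  show v.1 ++ u.1.drop v.1.length = u.1
  obtain ⟨t, ht⟩ := h
  rw [← ht, List.drop_left]

end Vtx

/-- The section map `φ_v` at the level of plain functions. -/
def secFun (v : Vtx A 0) (f : Equiv.Perm (Vtx A 0)) : Vtx A v.len → Vtx A v.len :=
  fun w => Vtx.dropPre v.len (f (Vtx.cat v w))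

theorem secFun_key {v : Vtx A 0} {f : Equiv.Perm (Vtx A 0)}
    (hf : f ∈ vstab (treeAut A 0) v) (w : Vtx A v.len) :
    Vtx.cat v (secFun v f w) = f (Vtx.cat v w) := by
  obtain ⟨⟨hlen, hpre⟩, hfix⟩ := hf
  apply Vtx.cat_dropPre
  have := (hpre v (Vtx.cat v w))
  rw [hfix] at this
  exact this.mpr (Vtx.pre_cat v w)

theorem secFun_mul {v : Vtx A 0} {f g : Equiv.Perm (Vtx A 0)}
    (hf : f ∈ vstab (treeAut A 0) v) (hg : g ∈ vstab (treeAut A 0) v) :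
    secFun v (f * g) = secFun v f ∘ secFun v g := by
  funext w
  show Vtx.dropPre v.len ((f * g) (Vtx.cat v w)) = Vtx.dropPre v.len (f (Vtx.cat v (secFun v g w)))
  rw [secFun_key hg w]
  rfl

theorem secFun_one (v : Vtx A 0) : secFun v (1 : Equiv.Perm (Vtx A 0)) = id := by
  funext w
  show Vtx.dropPre v.len ((1 : Equiv.Perm (Vtx A 0)) (Vtx.cat v w)) = w
  rw [Equiv.Perm.one_apply]
  exact Vtx.dropPre_cat v w

theorem secFun_bij {v : Vtx A 0} {f : Equiv.Perm (Vtx A 0)}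
    (hf : f ∈ vstab (treeAut A 0) v) : Function.Bijective (secFun v f) := by
  rw [Function.bijective_iff_has_inverse]
  refine ⟨secFun v f⁻¹, fun w => ?_, fun w => ?_⟩
  · have h1 := congrFun (secFun_mul (inv_mem hf) hf) w
    rw [inv_mul_cancel, secFun_one] at h1
    exact h1.symm
  · have h1 := congrFun (secFun_mul hf (inv_mem hf)) w
    rw [mul_inv_cancel, secFun_one] at h1
    exact h1.symm

open Classical in
noncomputable def secPerm (v : Vtx A 0) (f : Equiv.Perm (Vtx A 0)) :
    Equiv.Perm (Vtx A v.len) :=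
  if h : Function.Bijective (secFun v f) then Equiv.ofBijective _ h else 1

theorem secPerm_coe {v : Vtx A 0} {f : Equiv.Perm (Vtx A 0)}
    (hf : f ∈ vstab (treeAut A 0) v) : ⇑(secPerm v f) = secFun v f := by
  unfold secPerm
  rw [dif_pos (secFun_bij hf)]
  rfl

/-- The section homomorphism `φ_v : St_{Aut(T)}(v) → Perm(T_{|v|})`. -/
noncomputable def phiHom (v : Vtx A 0) :
    ↥(vstab (treeAut A 0) v) →* Equiv.Perm (Vtx A v.len) where
  toFun f := secPerm v f.1
  map_one' := by
    apply Equiv.ext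
    intro w
    show secPerm v (1 : Equiv.Perm (Vtx A 0)) w = (1 : Equiv.Perm (Vtx A v.len)) w
    rw [secPerm_coe (one_mem (vstab (treeAut A 0) v)), secFun_one]
    rfl
  map_mul' := by
    intro f g
    apply Equiv.ext
    intro w
    show secPerm v (f.1 * g.1) w = (secPerm v f.1 * secPerm v g.1) w
    have e : (secPerm v f.1 * secPerm v g.1) w = secPerm v f.1 (secPerm v g.1 w) := rfl
    rw [e, secPerm_coe (mul_mem f.2 g.2), secPerm_coe f.2, secPerm_coe g.2,
      secFun_mul f.2 g.2]
    rfl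

/-- The image `φ_v(St_H(v)) ≤ Perm(T_{|v|})` of the stabiliser of `v` in `H` under the
section homomorphism at `v`; for `H ≤ G ≤ Aut(T)` this is the subgroup written `H_v`. -/
noncomputable def secSub (v : Vtx A 0) (H : Subgroup (Equiv.Perm (Vtx A 0))) :
    Subgroup (Equiv.Perm (Vtx A v.len)) :=
  Subgroup.map (phiHom v) ((vstab H v).subgroupOf (vstab (treeAut A 0) v))

/-- A subgroup `H ≤ G` has finite bi-index if the set of double cosets
`{HgH : g ∈ G}` is finite. -/
def FiniteBiIndex {G : Type*} [Group G] (H : Subgroup G) : Prop :=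
  {S : Set G | ∃ g : G, S = (H : Set G) * {g} * (H : Set G)}.Finite

/-- The set of double cosets of a subgroup `H` of a group `M` with representatives in a
subgroup `G` of `M`; for `H ≤ G` this is the set of double cosets `H\G/H`. -/
def doubleCosets {M : Type*} [Group M] (G H : Subgroup M) : Set (Set M) :=
  {S : Set M | ∃ g ∈ G, S = (H : Set M) * {g} * (H : Set M)}

/-- The pro-normal closure of a subgroup `H ≤ G`: the intersection of the subsets `HN`,
over all nontrivial normal subgroups `N` of `G`. -/
def pronormalClosure {G : Type*} [Group G] (H : Subgroup G) : Subgroup G where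
  carrier := ⋂ N ∈ {N : Subgroup G | N.Normal ∧ N ≠ ⊥}, (H : Set G) * (N : Set G)
  one_mem' := by
    simp only [Set.mem_iInter]
    rintro N ⟨hN, -⟩
    exact ⟨1, H.one_mem, 1, N.one_mem, mul_one 1⟩
  mul_mem' := by
    intro a b ha hb
    simp only [Set.mem_iInter] at ha hb ⊢
    rintro N hN
    obtain ⟨h₁, hh₁, n₁, hn₁, rfl⟩ := ha N hN
    obtain ⟨h₂, hh₂, n₂, hn₂, rfl⟩ := hb N hN
    refine ⟨h₁ * h₂, H.mul_mem hh₁ hh₂, (h₂⁻¹ * n₁ * h₂) * n₂, ?_, by group⟩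
    refine N.mul_mem ?_ hn₂
    have := hN.1.conj_mem n₁ hn₁ h₂⁻¹
    simpa using this
  inv_mem' := by
    intro a ha
    simp only [Set.mem_iInter] at ha ⊢
    rintro N hN
    obtain ⟨h, hh, n, hn, rfl⟩ := ha N hN
    refine ⟨h⁻¹, H.inv_mem hh, h * n⁻¹ * h⁻¹, hN.1.conj_mem n⁻¹ (N.inv_mem hn) h, by group⟩

/-- A subgroup `H ≤ G` is quasi-prodense if its pro-normal closure has finite index. -/
def QuasiProdense {G : Type*} [Group G] (H : Subgroup G) : Prop :=
  (pronormalClosure H).index ≠ 0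

/-- `K` is a normal subgroup of the subgroup `H` (both subgroups of an ambient group). -/
def NormalIn {M : Type*} [Group M] (H K : Subgroup M) : Prop :=
  K ≤ H ∧ ∀ h ∈ H, ∀ k ∈ K, h * k * h⁻¹ ∈ K

/-- `K` is a subnormal subgroup of the subgroup `H`. -/
def SubnormalIn {M : Type*} [Group M] (H K : Subgroup M) : Prop :=
  ∃ (m : ℕ) (c : ℕ → Subgroup M), c 0 = K ∧ c m = H ∧ ∀ i < m, NormalIn (c (i + 1)) (c i)

/-- The iterated derived subgroups of a subgroup. -/
def iterDerived {M : Type*} [Group M] (H : Subgroup M) : ℕ → Subgroup M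
  | 0 => H
  | (k + 1) => ⁅iterDerived H k, iterDerived H k⁆


/-! ## Auxiliary lemmas -/

section Aux

variable {A : ℕ → Type*}

namespace Vtx

theorem pre_trans' {k : ℕ} {a b c : Vtx A k} (h1 : Pre a b) (h2 : Pre b c) : Pre a c :=
  List.IsPrefix.trans h1 h2

theorem eq_of_pre_len {k : ℕ} {a b : Vtx A k} (h : Pre a b) (hl : a.len = b.len) : a = b :=
  Subtype.ext (h.eq_of_length hl)

theorem pre_len_le {k : ℕ} {a b : Vtx A k} (h : Pre a b) : a.len ≤ b.len :=
  h.length_le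

theorem eq_of_pre_pre {k : ℕ} {a b c : Vtx A k} (h1 : Pre a c) (h2 : Pre b c)
    (hl : a.len = b.len) : a = b :=
  Subtype.ext ((List.prefix_of_prefix_length_le h1 h2 (le_of_eq hl)).eq_of_length hl)

theorem len_cat (v : Vtx A 0) (w : Vtx A v.len) : (cat v w).len = v.len + w.len := by
  show (v.1 ++ w.1).length = v.1.length + w.1.length
  exact List.length_append

theorem cat_injective (v : Vtx A 0) : Function.Injective (cat v) := by
  intro a b h
  have h2 := congrArg (dropPre v.len) h
  rwa [dropPre_cat, dropPre_cat] at h2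

theorem pre_cat_iff (v : Vtx A 0) (a b : Vtx A v.len) : Pre (cat v a) (cat v b) ↔ Pre a b := by
  show v.1 ++ a.1 <+: v.1 ++ b.1 ↔ _
  exact List.prefix_append_right_inj v.1

end Vtx

theorem perm_inv_fix {α : Type*} {e : Equiv.Perm α} {t : α} (h : e t = t) : e⁻¹ t = t := by
  conv_lhs => rw [← h]
  exact Equiv.symm_apply_apply e t

theorem mem_treeAut_iff {k : ℕ} {f : Equiv.Perm (Vtx A k)} :
    f ∈ treeAut A k ↔ (∀ v, (f v).len = v.len) ∧ ∀ v w, Vtx.Pre (f v) (f w) ↔ Vtx.Pre v w :=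
  Iff.rfl

theorem mem_vstab_iff {k : ℕ} {H : Subgroup (Equiv.Perm (Vtx A k))} {v g} :
    g ∈ vstab H v ↔ g ∈ H ∧ g v = v := Iff.rfl

theorem mem_rist_iff {k : ℕ} {H : Subgroup (Equiv.Perm (Vtx A k))} {w g} :
    g ∈ rist H w ↔ g ∈ H ∧ ∀ t, ¬ Vtx.Pre w t → g t = t := Iff.rfl

theorem vstab_mono {k : ℕ} {H K : Subgroup (Equiv.Perm (Vtx A k))} (h : H ≤ K) (v : Vtx A k) :
    vstab H v ≤ vstab K v := fun g hg => ⟨h hg.1, hg.2⟩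

section Rist

variable {k : ℕ} {G : Subgroup (Equiv.Perm (Vtx A k))}

theorem rist_fix_self (hle : G ≤ treeAut A k) {w r} (hr : r ∈ rist G w) : r w = w := by
  obtain ⟨hrG, hfix⟩ := hr
  obtain ⟨hlen, hpre⟩ := hle hrG
  by_contra hne
  have h1 : ¬ Vtx.Pre w (r w) := fun hp => hne ((Vtx.eq_of_pre_len hp (hlen w).symm).symm)
  exact hne (r.injective (hfix (r w) h1))

theorem rist_conj (hle : G ≤ treeAut A k) {w g r} (hg : g ∈ G) (hr : r ∈ rist G w) :
    g * r * g⁻¹ ∈ rist G (g w) := by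
  obtain ⟨hrG, hfix⟩ := hr
  obtain ⟨hlen, hpre⟩ := hle hg
  refine ⟨mul_mem (mul_mem hg hrG) (inv_mem hg), fun t ht => ?_⟩
  have h1 : ¬ Vtx.Pre w (g⁻¹ t) := by
    intro hp
    apply ht
    have h2 := (hpre w (g⁻¹ t)).mpr hp
    rwa [(show g (g⁻¹ t) = t from Equiv.apply_symm_apply g t)] at h2
  show g (r (g⁻¹ t)) = t
  rw [hfix _ h1, (show g (g⁻¹ t) = t from Equiv.apply_symm_apply g t)]

theorem rist_mono {w w'} (hp : Vtx.Pre w w') : rist G w' ≤ rist G w :=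
  fun r hr => ⟨hr.1, fun t ht => hr.2 t (fun hp' => ht (Vtx.pre_trans' hp hp'))⟩

theorem moved_pre {w r t} (hr : r ∈ rist G w) (ht : r t ≠ t) : Vtx.Pre w t := by
  by_contra h
  exact ht (hr.2 t h)

theorem rist_fix_v (hle : G ≤ treeAut A k) {w v r} (hr : r ∈ rist G w)
    (hlen : v.len ≤ w.len) : r v = v := by
  by_cases h : Vtx.Pre w v
  · have hww : w = v := Vtx.eq_of_pre_len h (le_antisymm (Vtx.pre_len_le h) hlen)
    rw [← hww]
    exact rist_fix_self hle hr
  · exact hr.2 v h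

theorem rist_nontrivial (hle : G ≤ treeAut A k) (htrans : SphTrans G)
    (hnt : ∀ n, ristLev G n ≠ ⊥) (w : Vtx A k) : ∃ r, r ∈ rist G w ∧ r ≠ 1 := by
  have h := hnt w.len
  have hex : ∃ w₀ ∈ {v : Vtx A k | v.len = w.len}, rist G w₀ ≠ ⊥ := by
    by_contra hc
    push_neg at hc
    apply h
    refine le_bot_iff.mp (iSup₂_le fun v hv => ?_)
    exact (hc v hv).le
  obtain ⟨w₀, hw₀len, hw₀⟩ := hex
  obtain ⟨r₀, hr₀ne⟩ := Subgroup.ne_bot_iff_exists_ne_one.mp hw₀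
  obtain ⟨g, hgG, hgw⟩ := htrans w₀ w hw₀len
  refine ⟨g * r₀.1 * g⁻¹, ?_, ?_⟩
  · have h2 := rist_conj hle hgG r₀.2
    rwa [hgw] at h2
  · intro hcon
    apply hr₀ne
    rw [← OneMemClass.coe_eq_one]
    have h3 : r₀.1 = g⁻¹ * (g * r₀.1 * g⁻¹) * g := by group
    rw [h3, hcon]
    group

theorem rist_nonabelian (hle : G ≤ treeAut A k) (htrans : SphTrans G)
    (hnt : ∀ n, ristLev G n ≠ ⊥) (w : Vtx A k) :
    ∃ r s, r ∈ rist G w ∧ s ∈ rist G w ∧ r * s ≠ s * r := by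
  obtain ⟨r, hr, hrne⟩ := rist_nontrivial hle htrans hnt w
  have hex : ∃ x₀, r x₀ ≠ x₀ := by
    by_contra hc
    push_neg at hc
    exact hrne (Equiv.ext fun t => by simpa using hc t)
  obtain ⟨x₀, hx₀⟩ := hex
  have hwx₀ : Vtx.Pre w x₀ := moved_pre hr hx₀
  obtain ⟨s, hs, hsne⟩ := rist_nontrivial hle htrans hnt x₀
  refine ⟨r, s, hr, rist_mono hwx₀ hs, ?_⟩
  intro hcomm
  have hex2 : ∃ y₀, s y₀ ≠ y₀ := by
    by_contra hc
    push_neg at hc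
    exact hsne (Equiv.ext fun t => by simpa using hc t)
  obtain ⟨y₀, hy₀⟩ := hex2
  have hx₀y₀ : Vtx.Pre x₀ y₀ := moved_pre hs hy₀
  obtain ⟨hlenr, hprer⟩ := hle hr.1
  have hsz : s (r y₀) = r y₀ := by
    apply hs.2
    intro hp
    have hp2 : Vtx.Pre (r x₀) (r y₀) := (hprer x₀ y₀).mpr hx₀y₀
    exact hx₀ (Vtx.eq_of_pre_pre hp2 hp (hlenr x₀))
  have hc2 : (r * s) y₀ = (s * r) y₀ := by rw [hcomm]
  have hc3 : r (s y₀) = s (r y₀) := hc2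
  rw [hsz] at hc3
  exact hy₀ (r.injective hc3)

end Rist

section Sec

variable (v : Vtx A 0)

theorem sec_cat_key {f} (hf : f ∈ vstab (treeAut A 0) v) (w : Vtx A v.len) :
    Vtx.cat v (secPerm v f w) = f (Vtx.cat v w) := by
  have h1 : (secPerm v f) w = secFun v f w := congrFun (secPerm_coe hf) w
  rw [h1]
  exact secFun_key hf w

theorem sec_one : secPerm v (1 : Equiv.Perm (Vtx A 0)) = 1 := by
  apply Equiv.ext
  intro w
  have h1 : (secPerm v 1) w = secFun v 1 w :=
    congrFun (secPerm_coe (one_mem (vstab (treeAut A 0) v))) w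
  rw [h1, secFun_one]
  rfl

theorem sec_mul {f g} (hf : f ∈ vstab (treeAut A 0) v) (hg : g ∈ vstab (treeAut A 0) v) :
    secPerm v (f * g) = secPerm v f * secPerm v g := by
  apply Equiv.ext
  intro w
  show secPerm v (f * g) w = secPerm v f (secPerm v g w)
  rw [congrFun (secPerm_coe (mul_mem hf hg)) w, congrFun (secPerm_coe hg) w,
    congrFun (secPerm_coe hf) _, secFun_mul hf hg]
  rfl

theorem sec_inv {f} (hf : f ∈ vstab (treeAut A 0) v) :
    secPerm v f⁻¹ = (secPerm v f)⁻¹ := by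
  rw [eq_inv_iff_mul_eq_one, ← sec_mul v (inv_mem hf) hf, inv_mul_cancel, sec_one]

theorem sec_len {f} (hf : f ∈ vstab (treeAut A 0) v) (w : Vtx A v.len) :
    (secPerm v f w).len = w.len := by
  have h1 := congrArg Vtx.len (sec_cat_key v hf w)
  rw [Vtx.len_cat] at h1
  have h2 : (f (Vtx.cat v w)).len = (Vtx.cat v w).len := hf.1.1 (Vtx.cat v w)
  rw [Vtx.len_cat] at h2
  omega

theorem sec_pre_iff {f} (hf : f ∈ vstab (treeAut A 0) v) (a b : Vtx A v.len) :
    Vtx.Pre (secPerm v f a) (secPerm v f b) ↔ Vtx.Pre a b := by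
  rw [← Vtx.pre_cat_iff v (secPerm v f a) (secPerm v f b), sec_cat_key v hf a,
    sec_cat_key v hf b, hf.1.2, Vtx.pre_cat_iff]

theorem sec_fix {f} (hf : f ∈ vstab (treeAut A 0) v) {t}
    (h : f (Vtx.cat v t) = Vtx.cat v t) : secPerm v f t = t :=
  Vtx.cat_injective v (by rw [sec_cat_key v hf t, h])

theorem sec_eq_one {f} (hf : f ∈ vstab (treeAut A 0) v)
    (h : ∀ t, f (Vtx.cat v t) = Vtx.cat v t) : secPerm v f = 1 :=
  Equiv.ext fun t => sec_fix v hf (h t)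

theorem sec_inj {f g} (hf : f ∈ vstab (treeAut A 0) v) (hg : g ∈ vstab (treeAut A 0) v)
    (hfo : ∀ t, ¬ Vtx.Pre v t → f t = t) (hgo : ∀ t, ¬ Vtx.Pre v t → g t = t)
    (h : secPerm v f = secPerm v g) : f = g := by
  apply Equiv.ext
  intro t
  by_cases hp : Vtx.Pre v t
  · rw [← Vtx.cat_dropPre hp, ← sec_cat_key v hf, ← sec_cat_key v hg, h]
  · rw [hfo t hp, hgo t hp]

theorem mem_secSub_iff {K : Subgroup (Equiv.Perm (Vtx A 0))} (hK : K ≤ treeAut A 0)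
    {x : Equiv.Perm (Vtx A v.len)} :
    x ∈ secSub v K ↔ ∃ g, g ∈ vstab K v ∧ secPerm v g = x := by
  constructor
  · rintro ⟨y, hy, rfl⟩
    exact ⟨y.1, Subgroup.mem_subgroupOf.mp hy, rfl⟩
  · rintro ⟨g, hg, rfl⟩
    exact ⟨⟨g, vstab_mono hK v hg⟩, Subgroup.mem_subgroupOf.mpr hg, rfl⟩

end Sec

theorem commute_of_disj_supp {α : Type*} {a b : Equiv.Perm α} {Sa Sb : Set α}
    (ha : ∀ t, t ∉ Sa → a t = t) (hb : ∀ t, t ∉ Sb → b t = t)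
    (hd : ∀ t, t ∈ Sa → t ∈ Sb → False) : Commute a b := by
  have hmema : ∀ t ∈ Sa, a t ∈ Sa := by
    intro t ht
    by_contra h
    have h2 := a.injective (ha (a t) h)
    rw [h2] at h
    exact h ht
  have hmemb : ∀ t ∈ Sb, b t ∈ Sb := by
    intro t ht
    by_contra h
    have h2 := b.injective (hb (b t) h)
    rw [h2] at h
    exact h ht
  apply Equiv.ext
  intro t
  show a (b t) = b (a t)
  by_cases hta : t ∈ Sa
  · have h1 : b t = t := hb t (fun h => hd t hta h)
    have h2 : b (a t) = a t := hb _ (fun h => hd _ (hmema t hta) h)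
    rw [h1, h2]
  · by_cases htb : t ∈ Sb
    · have h2 : a (b t) = b t := ha _ (fun h => hd _ h (hmemb t htb))
      rw [h2, ha t hta]
    · rw [hb t htb, ha t hta, hb t htb]

theorem mem_pronormalClosure {Γ : Type*} [Group Γ] {K : Subgroup Γ} {x : Γ} :
    x ∈ pronormalClosure K ↔
      ∀ N : Subgroup Γ, N.Normal → N ≠ ⊥ → x ∈ (K : Set Γ) * (N : Set Γ) := by
  change x ∈ ⋂ N ∈ {N : Subgroup Γ | N.Normal ∧ N ≠ ⊥}, (K : Set Γ) * (N : Set Γ) ↔ _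
  simp only [Set.mem_iInter, Set.mem_setOf_eq, and_imp]

/-- The key lemma: every nontrivial normal subgroup of `G_v` contains the image of a
nontrivial element of the rigid stabiliser of `v` in `G`. -/
theorem key_lemma {A : ℕ → Type*} {G : Subgroup (Equiv.Perm (Vtx A 0))}
    (hle : G ≤ treeAut A 0) (htrans : SphTrans G) (hnt : ∀ n, ristLev G n ≠ ⊥)
    (v : Vtx A 0) (N' : Subgroup ↥(secSub v G)) (hN : N'.Normal) (hNbot : N' ≠ ⊥) :
    ∃ c₀ : Equiv.Perm (Vtx A 0), c₀ ∈ rist G v ∧ c₀ ≠ 1 ∧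
      secPerm v c₀ ∈ Subtype.val '' (N' : Set ↥(secSub v G)) := by
  obtain ⟨Xn, hXnne⟩ := Subgroup.ne_bot_iff_exists_ne_one.mp hNbot
  set X' : ↥(secSub v G) := Xn.1 with hX'def
  have hX'N : X' ∈ N' := Xn.2
  have hX'ne : X' ≠ 1 := fun h => hXnne (Subtype.ext h)
  set x : Equiv.Perm (Vtx A v.len) := X'.1 with hxdef
  have hxne : x ≠ 1 := fun h => hX'ne (Subtype.ext h)
  obtain ⟨xh, hxh, hxeq⟩ := (mem_secSub_iff v hle).mp X'.2
  have hxhA : xh ∈ vstab (treeAut A 0) v := vstab_mono hle v hxh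
  have hex : ∃ u, x u ≠ u := by
    by_contra hc
    push_neg at hc
    exact hxne (Equiv.ext fun t => by simpa using hc t)
  obtain ⟨u, hu⟩ := hex
  set w := Vtx.cat v u with hwdef
  obtain ⟨r, s, hr, hs, hrs⟩ := rist_nonabelian hle htrans hnt w
  have hvw : Vtx.Pre v w := Vtx.pre_cat v u
  have hlenvw : v.len ≤ w.len := Vtx.pre_len_le hvw
  have hrG : r ∈ G := hr.1
  have hsG : s ∈ G := hs.1
  have hrv : r ∈ vstab G v := ⟨hrG, rist_fix_v hle hr hlenvw⟩
  have hsv : s ∈ vstab G v := ⟨hsG, rist_fix_v hle hs hlenvw⟩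
  have hrA : r ∈ vstab (treeAut A 0) v := vstab_mono hle v hrv
  have hsA : s ∈ vstab (treeAut A 0) v := vstab_mono hle v hsv
  have hrsuppv : ∀ t, ¬ Vtx.Pre v t → r t = t := fun t ht =>
    hr.2 t (fun hp => ht (Vtx.pre_trans' hvw hp))
  have hssuppv : ∀ t, ¬ Vtx.Pre v t → s t = t := fun t ht =>
    hs.2 t (fun hp => ht (Vtx.pre_trans' hvw hp))
  set r' := secPerm v r with hr'def
  set s' := secPerm v s with hs'def
  have hr'G : r' ∈ secSub v G := (mem_secSub_iff v hle).mpr ⟨r, hrv, rfl⟩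
  have hs'G : s' ∈ secSub v G := (mem_secSub_iff v hle).mpr ⟨s, hsv, rfl⟩
  set R' : ↥(secSub v G) := ⟨r', hr'G⟩ with hR'def
  set S' : ↥(secSub v G) := ⟨s', hs'G⟩ with hS'def
  have hr'supp : ∀ t, ¬ Vtx.Pre u t → r' t = t := by
    intro t ht
    exact sec_fix v hrA (hr.2 (Vtx.cat v t) (fun hp => ht ((Vtx.pre_cat_iff v u t).mp hp)))
  have hs'supp : ∀ t, ¬ Vtx.Pre u t → s' t = t := by
    intro t ht
    exact sec_fix v hsA (hs.2 (Vtx.cat v t) (fun hp => ht ((Vtx.pre_cat_iff v u t).mp hp)))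
  have hxlen : ∀ t, (x t).len = t.len := by
    rw [hxdef, ← hxeq]
    exact sec_len v hxhA
  have hxpre : ∀ a b, Vtx.Pre (x a) (x b) ↔ Vtx.Pre a b := by
    rw [hxdef, ← hxeq]
    exact sec_pre_iff v hxhA
  have hysupp : ∀ t, ¬ Vtx.Pre (x u) t → (x * r' * x⁻¹) t = t := by
    intro t ht
    have h1 : ¬ Vtx.Pre u (x⁻¹ t) := by
      intro hp
      apply ht
      have h2 := (hxpre u (x⁻¹ t)).mpr hp
      rwa [(show x (x⁻¹ t) = t from Equiv.apply_symm_apply x t)] at h2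
    show x (r' (x⁻¹ t)) = t
    rw [hr'supp _ h1, (show x (x⁻¹ t) = t from Equiv.apply_symm_apply x t)]
  have hdisj : ∀ t, Vtx.Pre u t → Vtx.Pre (x u) t → False := fun t h1 h2 =>
    hu (Vtx.eq_of_pre_pre h2 h1 (hxlen u))
  have hyr : Commute (x * r' * x⁻¹) r' :=
    commute_of_disj_supp hysupp hr'supp (fun t h1 h2 => hdisj t h2 h1)
  have hys : Commute (x * r' * x⁻¹) s' :=
    commute_of_disj_supp hysupp hs'supp (fun t h1 h2 => hdisj t h2 h1)
  set y := x * r' * x⁻¹ with hydef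
  have hyz : Commute y (r'⁻¹ * (s' * r')) := (hyr.inv_right).mul_right (hys.mul_right hyr)
  have hconjeq : y * (r'⁻¹ * s' * r') * y⁻¹ = r'⁻¹ * s' * r' := by
    calc y * (r'⁻¹ * s' * r') * y⁻¹ = (y * (r'⁻¹ * (s' * r'))) * y⁻¹ := by group
    _ = ((r'⁻¹ * (s' * r')) * y) * y⁻¹ := by rw [hyz.eq]
    _ = r'⁻¹ * s' * r' := by group
  have hceq : (y * r'⁻¹) * s' * (y * r'⁻¹)⁻¹ * s'⁻¹ = r'⁻¹ * s' * r' * s'⁻¹ := by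
    calc (y * r'⁻¹) * s' * (y * r'⁻¹)⁻¹ * s'⁻¹
        = (y * (r'⁻¹ * s' * r') * y⁻¹) * s'⁻¹ := by group
    _ = r'⁻¹ * s' * r' * s'⁻¹ := by rw [hconjeq]
  -- membership of the double commutator in N'
  have hC1 : X' * R' * X'⁻¹ * R'⁻¹ ∈ N' := by
    have h2 : R' * X'⁻¹ * R'⁻¹ ∈ N' := hN.conj_mem X'⁻¹ (N'.inv_mem hX'N) R'
    have h3 := N'.mul_mem hX'N h2
    have h4 : X' * (R' * X'⁻¹ * R'⁻¹) = X' * R' * X'⁻¹ * R'⁻¹ := by group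
    rwa [h4] at h3
  set C1 := X' * R' * X'⁻¹ * R'⁻¹ with hC1def
  have hC : C1 * S' * C1⁻¹ * S'⁻¹ ∈ N' := by
    have h2 : S' * C1⁻¹ * S'⁻¹ ∈ N' := hN.conj_mem C1⁻¹ (N'.inv_mem hC1) S'
    have h3 := N'.mul_mem hC1 h2
    have h4 : C1 * (S' * C1⁻¹ * S'⁻¹) = C1 * S' * C1⁻¹ * S'⁻¹ := by group
    rwa [h4] at h3
  refine ⟨r⁻¹ * s * r * s⁻¹, ?_, ?_, ?_⟩
  · -- in rist G v
    refine ⟨mul_mem (mul_mem (mul_mem (inv_mem hrG) hsG) hrG) (inv_mem hsG), fun t ht => ?_⟩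
    show r⁻¹ (s (r (s⁻¹ t))) = t
    rw [perm_inv_fix (hssuppv t ht), hrsuppv t ht, hssuppv t ht, perm_inv_fix (hrsuppv t ht)]
  · -- nontrivial
    intro h
    rw [mul_inv_eq_one, mul_assoc, inv_mul_eq_iff_eq_mul] at h
    exact hrs h.symm
  · -- image in N'
    have hsec : secPerm v (r⁻¹ * s * r * s⁻¹) = r'⁻¹ * s' * r' * s'⁻¹ := by
      rw [sec_mul v (mul_mem (mul_mem (inv_mem hrA) hsA) hrA) (inv_mem hsA),
        sec_mul v (mul_mem (inv_mem hrA) hsA) hrA,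
        sec_mul v (inv_mem hrA) hsA, sec_inv v hrA, sec_inv v hsA]
    refine ⟨C1 * S' * C1⁻¹ * S'⁻¹, hC, ?_⟩
    have hval : ((C1 * S' * C1⁻¹ * S'⁻¹ : ↥(secSub v G)) : Equiv.Perm (Vtx A v.len))
        = (y * r'⁻¹) * s' * (y * r'⁻¹)⁻¹ * s'⁻¹ := by
      have hC1val : (C1 : Equiv.Perm (Vtx A v.len)) = y * r'⁻¹ := by
        rw [hC1def]
        push_cast
        rw [hydef]
      push_cast
      rw [hC1val]
    rw [hval, hceq, hsec]

/-- The projection homomorphism from the stabiliser of `v` in `G` onto `G_v`. -/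
noncomputable def pHom {A : ℕ → Type*} (G : Subgroup (Equiv.Perm (Vtx A 0)))
    (hle : G ≤ treeAut A 0) (v : Vtx A 0) : ↥(vstab G v) →* ↥(secSub v G) where
  toFun g := ⟨secPerm v g.1, (mem_secSub_iff v hle).mpr ⟨g.1, g.2, rfl⟩⟩
  map_one' := Subtype.ext (sec_one v)
  map_mul' a b := Subtype.ext (sec_mul v (vstab_mono hle v a.2) (vstab_mono hle v b.2))

theorem pHom_surjective {A : ℕ → Type*} (G : Subgroup (Equiv.Perm (Vtx A 0)))
    (hle : G ≤ treeAut A 0) (v : Vtx A 0) : Function.Surjective (pHom G hle v) := by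
  intro y
  obtain ⟨g, hg, hgeq⟩ := (mem_secSub_iff v hle).mp y.2
  exact ⟨⟨g, hg⟩, Subtype.ext hgeq⟩

end Aux

/-- Sections of quasi-prodense subgroups of weakly branch groups are quasi-prodense:
if `H` is quasi-prodense in the weakly branch group `G`, then `H_v = φ_v(St_H(v))` is
quasi-prodense in `G_v = φ_v(St_G(v))` for every vertex `v`. -/
theorem section_quasiProdense
    (A : ℕ → Type*) [∀ i, Fintype (A i)] (hA : ∀ i, 2 ≤ Fintype.card (A i))
    (G H : Subgroup (Equiv.Perm (Vtx A 0))) (hG : IsWeaklyBranch G)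
    (hHG : H ≤ G) (hqp : QuasiProdense (H.subgroupOf G)) (v : Vtx A 0) :
    QuasiProdense ((secSub v H).subgroupOf (secSub v G)) := by
  classical
  obtain ⟨hleG, htrans, hnt⟩ := hG
  have hHle : H ≤ treeAut A 0 := le_trans hHG hleG
  have hvstabG : vstab G v ≤ G := fun g hg => hg.1
  set p := pHom G hleG v with hpdef
  have hpsurj : Function.Surjective p := pHom_surjective G hleG v
  set Hbar := pronormalClosure (H.subgroupOf G) with hHbardef
  set D := Subgroup.comap (Subgroup.inclusion hvstabG) Hbar with hDdef
  -- main inclusion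
  have hMain : Subgroup.map p D ≤ pronormalClosure ((secSub v H).subgroupOf (secSub v G)) := by
    rintro X ⟨g, hgD, rfl⟩
    rw [mem_pronormalClosure]
    intro N' hN'norm hN'bot
    obtain ⟨c₀, hc₀rist, hc₀ne, hc₀img⟩ := key_lemma hleG htrans hnt v N' hN'norm hN'bot
    -- the normal subgroup of G generated by the relevant rigid stabiliser elements
    set S : Set (Equiv.Perm (Vtx A 0)) :=
      {m | ∃ g₀ ∈ G, ∃ k₀, (k₀ ∈ rist G v ∧
        secPerm v k₀ ∈ Subtype.val '' (N' : Set ↥(secSub v G))) ∧ m = g₀ * k₀ * g₀⁻¹}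
      with hSdef
    set N₀ := Subgroup.closure S with hN₀def
    have hc₀S : c₀ ∈ S := ⟨1, one_mem G, c₀, ⟨hc₀rist, hc₀img⟩, by group⟩
    have hc₀N₀ : c₀ ∈ N₀ := Subgroup.subset_closure hc₀S
    have hSG : S ⊆ (G : Set (Equiv.Perm (Vtx A 0))) := by
      rintro m ⟨g₀, hg₀, k₀, ⟨hk₀, _⟩, rfl⟩
      exact mul_mem (mul_mem hg₀ hk₀.1) (inv_mem hg₀)
    have hN₀G : N₀ ≤ G := (Subgroup.closure_le G).mpr hSG
    -- every generator fixes v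
    have hgenfix : ∀ m ∈ S, m v = v := by
      rintro m ⟨g₀, hg₀, k₀, ⟨hk₀, _⟩, rfl⟩
      have hconj : g₀ * k₀ * g₀⁻¹ ∈ rist G (g₀ v) := rist_conj hleG hg₀ hk₀
      have hlen : v.len ≤ (g₀ v).len := by
        obtain ⟨hlen0, _⟩ := hleG hg₀
        rw [hlen0 v]
      exact rist_fix_v hleG hconj hlen
    have hN₀fix : ∀ m ∈ N₀, m v = v := by
      intro m hm
      induction hm using Subgroup.closure_induction with
      | mem a ha => exact hgenfix a ha
      | one => rfl
      | mul a b _ _ ha hb =>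
        show a (b v) = v
        rw [hb, ha]
      | inv a _ ha => exact perm_inv_fix ha
    have hN₀stab : ∀ m ∈ N₀, m ∈ vstab G v := fun m hm => ⟨hN₀G hm, hN₀fix m hm⟩
    have hN₀stabA : ∀ m ∈ N₀, m ∈ vstab (treeAut A 0) v := fun m hm =>
      vstab_mono hleG v (hN₀stab m hm)
    -- N₀ is normalised by G
    have hconjmem : ∀ gg ∈ G, ∀ m ∈ N₀, gg * m * gg⁻¹ ∈ N₀ := by
      intro gg hgg m hm
      induction hm using Subgroup.closure_induction with
      | mem a ha =>
        apply Subgroup.subset_closure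
        obtain ⟨g₀, hg₀, k₀, hk₀, rfl⟩ := ha
        refine ⟨gg * g₀, mul_mem hgg hg₀, k₀, hk₀, by group⟩
      | one => simpa using one_mem N₀
      | mul a b _ _ ha hb =>
        have heq : gg * (a * b) * gg⁻¹ = (gg * a * gg⁻¹) * (gg * b * gg⁻¹) := by group
        rw [heq]
        exact mul_mem ha hb
      | inv a _ ha =>
        have heq : gg * a⁻¹ * gg⁻¹ = (gg * a * gg⁻¹)⁻¹ := by group
        rw [heq]
        exact inv_mem ha
    -- the image of N₀ under the section lands in N'
    have himg : ∀ m ∈ N₀, secPerm v m ∈ Subtype.val '' (N' : Set ↥(secSub v G)) := by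
      intro m hm
      induction hm using Subgroup.closure_induction with
      | mem a ha =>
        obtain ⟨g₀, hg₀, k₀, ⟨hk₀, hk₀img⟩, rfl⟩ := ha
        have hk₀stab : k₀ ∈ vstab G v := ⟨hk₀.1, rist_fix_self hleG hk₀⟩
        have hk₀A : k₀ ∈ vstab (treeAut A 0) v := vstab_mono hleG v hk₀stab
        by_cases hg₀v : g₀ v = v
        · have hg₀stab : g₀ ∈ vstab G v := ⟨hg₀, hg₀v⟩
          have hg₀A : g₀ ∈ vstab (treeAut A 0) v := vstab_mono hleG v hg₀stab
          have hsec : secPerm v (g₀ * k₀ * g₀⁻¹)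
              = secPerm v g₀ * secPerm v k₀ * (secPerm v g₀)⁻¹ := by
            rw [sec_mul v (mul_mem hg₀A hk₀A) (inv_mem hg₀A), sec_mul v hg₀A hk₀A,
              sec_inv v hg₀A]
          obtain ⟨K', hK'N, hK'val⟩ := hk₀img
          set P' := p ⟨g₀, hg₀stab⟩ with hP'def
          refine ⟨P' * K' * P'⁻¹, hN'norm.conj_mem K' hK'N P', ?_⟩
          have hPval : (P' : Equiv.Perm (Vtx A v.len)) = secPerm v g₀ := rfl
          push_cast
          rw [hPval, hK'val, hsec]
        · -- the section is trivial
          have hconj : g₀ * k₀ * g₀⁻¹ ∈ rist G (g₀ v) := rist_conj hleG hg₀ hk₀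
          have hmA : g₀ * k₀ * g₀⁻¹ ∈ vstab (treeAut A 0) v := by
            refine ⟨hleG (hSG ⟨g₀, hg₀, k₀, ⟨hk₀, hk₀img⟩, rfl⟩), hgenfix _ ⟨g₀, hg₀, k₀, ⟨hk₀, hk₀img⟩, rfl⟩⟩
          have hsec1 : secPerm v (g₀ * k₀ * g₀⁻¹) = 1 := by
            apply sec_eq_one v hmA
            intro t
            apply hconj.2
            intro hp
            apply hg₀v
            have hlen : (g₀ v).len = v.len := by
              obtain ⟨hlen0, _⟩ := hleG hg₀
              exact hlen0 v
            have hpv : Vtx.Pre v (Vtx.cat v t) := Vtx.pre_cat v t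
            exact Vtx.eq_of_pre_pre hp hpv hlen
          rw [hsec1]
          exact ⟨1, one_mem N', rfl⟩
      | one =>
        rw [sec_one]
        exact ⟨1, one_mem N', rfl⟩
      | mul a b hamem hbmem ha hb =>
        obtain ⟨Ka, hKa, hKaval⟩ := ha
        obtain ⟨Kb, hKb, hKbval⟩ := hb
        refine ⟨Ka * Kb, mul_mem hKa hKb, ?_⟩
        push_cast
        rw [hKaval, hKbval, sec_mul v (hN₀stabA a hamem) (hN₀stabA b hbmem)]
      | inv a hamem ha =>
        obtain ⟨Ka, hKa, hKaval⟩ := ha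
        refine ⟨Ka⁻¹, inv_mem hKa, ?_⟩
        push_cast
        rw [hKaval, sec_inv v (hN₀stabA a hamem)]
    -- N₀.subgroupOf G is a nontrivial normal subgroup of G
    have hN₀norm : (N₀.subgroupOf G).Normal := by
      constructor
      rintro ⟨m, hmG⟩ hm ⟨gg, hggG⟩
      rw [Subgroup.mem_subgroupOf] at hm ⊢
      exact hconjmem gg hggG m hm
    have hN₀ne : N₀.subgroupOf G ≠ ⊥ := by
      rw [Subgroup.ne_bot_iff_exists_ne_one]
      refine ⟨⟨⟨c₀, hN₀G hc₀N₀⟩, Subgroup.mem_subgroupOf.mpr hc₀N₀⟩, ?_⟩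
      intro h
      exact hc₀ne (Subtype.ext_iff.mp (Subtype.ext_iff.mp h))
    -- decompose g
    have hgHbar : Subgroup.inclusion hvstabG g ∈ Hbar := hgD
    rw [hHbardef, mem_pronormalClosure] at hgHbar
    obtain ⟨h', hh', n', hn', heq⟩ := hgHbar (N₀.subgroupOf G) hN₀norm hN₀ne
    rw [SetLike.mem_coe, Subgroup.mem_subgroupOf] at hh' hn'
    have hgval : (g : Equiv.Perm (Vtx A 0)) = (h' : Equiv.Perm (Vtx A 0)) * n' := by
      have := congrArg (Subtype.val) heq
      rw [Subgroup.coe_inclusion] at this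
      simpa using this.symm
    have hn'stab : (n' : Equiv.Perm (Vtx A 0)) ∈ vstab G v := hN₀stab _ hn'
    have hh'stab : (h' : Equiv.Perm (Vtx A 0)) ∈ vstab G v := by
      have hfix : (h' : Equiv.Perm (Vtx A 0)) v = v := by
        have h1 : (h' : Equiv.Perm (Vtx A 0)) = g.1 * (n' : Equiv.Perm (Vtx A 0))⁻¹ := by
          rw [hgval]; group
        rw [h1]
        show g.1 ((n' : Equiv.Perm (Vtx A 0))⁻¹ v) = v
        rw [perm_inv_fix hn'stab.2, g.2.2]
      exact ⟨h'.2, hfix⟩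
    have hh'stabH : (h' : Equiv.Perm (Vtx A 0)) ∈ vstab H v := ⟨hh', hh'stab.2⟩
    -- assemble the product decomposition of p g
    obtain ⟨B', hB'N, hB'val⟩ := himg _ hn'
    refine Set.mem_mul.mpr ⟨p ⟨(h' : Equiv.Perm (Vtx A 0)), hh'stab⟩, ?_, B', hB'N, ?_⟩
    · rw [SetLike.mem_coe, Subgroup.mem_subgroupOf]
      exact (mem_secSub_iff v hHle).mpr ⟨h', hh'stabH, rfl⟩
    · apply Subtype.ext
      push_cast
      rw [hB'val]
      show secPerm v (h' : Equiv.Perm (Vtx A 0)) * secPerm v (n' : Equiv.Perm (Vtx A 0))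
        = secPerm v g.1
      rw [← sec_mul v (vstab_mono hleG v hh'stab) (vstab_mono hleG v hn'stab), ← hgval]
  -- finale: index bookkeeping
  have hHbarfin : Hbar.FiniteIndex := ⟨hqp⟩
  have hDidx : D.index ≠ 0 := by
    rw [hDdef, Subgroup.index_comap]
    have hinst : (Hbar.subgroupOf (Subgroup.inclusion hvstabG).range).FiniteIndex :=
      inferInstance
    exact hinst.index_ne_zero
  have hmapidx : (Subgroup.map p D).index ≠ 0 := by
    intro h0
    apply hDidx
    have h1 := Subgroup.index_comap_of_surjective (Subgroup.map p D) hpsurj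
    have h2 := Subgroup.index_dvd_of_le (Subgroup.le_comap_map p D)
    rw [h1, h0] at h2
    exact Nat.eq_zero_of_zero_dvd h2
  intro h0
  apply hmapidx
  have h2 := Subgroup.index_dvd_of_le hMain
  rw [h0] at h2
  exact Nat.eq_zero_of_zero_dvd h2
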